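/- Let E₁ : {0,1}^{n₁} × {0,1}^{d₁} → {0,1}^{m} be a (k₁, ε₁)-extractor and E₂ : {0,1}^{n₂} × {0,1}^{d} → {0,1}^{d₁} be a (k₂, ε₂)-extractor. Let (X₁, X₂) be a (k₁, k₂)-block source on {0,1}^{n₁} × {0,1}^{n₂} and let S be uniform on {0,1}^{d}, independent of (X₁, X₂). Then the distribution of E₁(X₁, E₂(X₂, S)) is (ε₁ + ε₂)-close in statistical distance to the uniform distribution on {0,1}^{m}. -/

import Mathlib

/-- `P` is a (finitely supported) probability distribution on the finite type `T`. -/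
def IsProb {T : Type*} [Fintype T] (P : T → ℝ) : Prop :=
  (∀ t, 0 ≤ P t) ∧ ∑ t, P t = 1

/-- Statistical (total variation) distance `(1/2)·Σ_t |P t − Q t|`. -/
noncomputable def statDist {T : Type*} [Fintype T] (P Q : T → ℝ) : ℝ :=
  (∑ t, |P t - Q t|) / 2

/-- `P` has min-entropy at least `k`: every point has probability at most `2^{−k}`. -/
noncomputable def MinEntropyGe {T : Type*} [Fintype T] (P : T → ℝ) (k : ℝ) : Prop :=
  ∀ t, P t ≤ (2 : ℝ) ^ (-k)

/-- The pushforward of `P` along `f`. -/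
noncomputable def pushf {A B : Type*} [Fintype A] [DecidableEq B] (P : A → ℝ) (f : A → B) :
    B → ℝ :=
  fun b => ∑ a, if f a = b then P a else 0

/-- `E : {0,1}^n × {0,1}^d → {0,1}^m` is a `(k, ε)`-extractor: for every `k`-source `X`
on `{0,1}^n`, the distribution `E(X, U_d)` is `ε`-close to uniform on `{0,1}^m`. -/
noncomputable def IsExtractor {n d m : ℕ} (k ε : ℝ)
    (E : (Fin n → Bool) → (Fin d → Bool) → (Fin m → Bool)) : Prop :=
  ∀ P : (Fin n → Bool) → ℝ, IsProb P → MinEntropyGe P k →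
    statDist
      (pushf (fun q : (Fin n → Bool) × (Fin d → Bool) =>
          P q.1 / (Fintype.card (Fin d → Bool) : ℝ))
        (fun q => E q.1 q.2))
      (fun _ => 1 / (Fintype.card (Fin m → Bool) : ℝ)) ≤ ε

/-- `(P₁, P₂)` jointly form a `(k₁, k₂)`-block source: the first marginal has min-entropy
at least `k₁`, and every conditional distribution of the second coordinate given a
first coordinate in the support has min-entropy at least `k₂`. -/
noncomputable def IsBlockSource {A B : Type*} [Fintype A] [Fintype B] (k₁ k₂ : ℝ)
    (P : A × B → ℝ) : Prop :=
  (∀ a, (∑ b, P (a, b)) ≤ (2 : ℝ) ^ (-k₁)) ∧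
  (∀ a, 0 < (∑ b, P (a, b)) → ∀ b, P (a, b) / (∑ b', P (a, b')) ≤ (2 : ℝ) ^ (-k₂))

lemma statDist_triangle' {T : Type*} [Fintype T] (P Q R : T → ℝ) :
    statDist P R ≤ statDist P Q + statDist Q R := by
  unfold statDist
  rw [← add_div, div_le_div_iff_of_pos_right (by norm_num : (0:ℝ) < 2)]
  rw [← Finset.sum_add_distrib]
  exact Finset.sum_le_sum fun t _ => abs_sub_le _ _ _

lemma statDist_pushf' {A B : Type*} [Fintype A] [Fintype B] [DecidableEq B]
    (P Q : A → ℝ) (f : A → B) :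
    statDist (pushf P f) (pushf Q f) ≤ statDist P Q := by
  unfold statDist pushf
  rw [div_le_div_iff_of_pos_right (by norm_num : (0:ℝ) < 2)]
  calc ∑ b, |(∑ a, if f a = b then P a else 0) - ∑ a, if f a = b then Q a else 0|
      ≤ ∑ b, ∑ a, (if f a = b then |P a - Q a| else 0) := by
        refine Finset.sum_le_sum fun b _ => ?_
        rw [← Finset.sum_sub_distrib]
        refine (Finset.abs_sum_le_sum_abs _ _).trans (le_of_eq ?_)
        refine Finset.sum_congr rfl fun a _ => ?_
        split_ifs <;> simp
    _ = ∑ a, ∑ b, (if f a = b then |P a - Q a| else 0) := Finset.sum_comm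
    _ = ∑ a, |P a - Q a| := by simp

lemma pushf_comp' {A B C : Type*} [Fintype A] [Fintype B] [DecidableEq B] [DecidableEq C]
    (P : A → ℝ) (f : A → B) (g : B → C) :
    pushf (pushf P f) g = pushf P (fun a => g (f a)) := by
  funext c
  simp only [pushf]
  have h1 : ∀ b, (if g b = c then ∑ a, if f a = b then P a else 0 else 0)
      = ∑ a, if f a = b ∧ g b = c then P a else 0 := by
    intro b; split_ifs with h <;> simp [h]
  rw [Finset.sum_congr rfl fun b _ => h1 b, Finset.sum_comm]
  refine Finset.sum_congr rfl fun a _ => ?_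
  simp [ite_and]

/-- **block-source extraction.** If `E₁` is a `(k₁,ε₁)`-extractor,
`E₂` is a `(k₂,ε₂)`-extractor, and `(X₁,X₂)` is a `(k₁,k₂)`-block source (with `S`
an independent uniform seed), then `E₁(X₁, E₂(X₂, S))` is `(ε₁+ε₂)`-close to uniform. -/
theorem stmt_16 {n₁ n₂ d₁ d m : ℕ} (k₁ k₂ ε₁ ε₂ : ℝ)
    (E₁ : (Fin n₁ → Bool) → (Fin d₁ → Bool) → (Fin m → Bool))
    (E₂ : (Fin n₂ → Bool) → (Fin d → Bool) → (Fin d₁ → Bool))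
    (hE₁ : IsExtractor k₁ ε₁ E₁) (hE₂ : IsExtractor k₂ ε₂ E₂)
    (P : (Fin n₁ → Bool) × (Fin n₂ → Bool) → ℝ)
    (hP : IsProb P) (hblock : IsBlockSource k₁ k₂ P) :
    statDist
      (pushf (fun q : ((Fin n₁ → Bool) × (Fin n₂ → Bool)) × (Fin d → Bool) =>
          P q.1 / (Fintype.card (Fin d → Bool) : ℝ))
        (fun q => E₁ q.1.1 (E₂ q.1.2 q.2)))
      (fun _ => 1 / (Fintype.card (Fin m → Bool) : ℝ)) ≤ ε₁ + ε₂ := by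
  classical
  set R : ((Fin n₁ → Bool) × (Fin n₂ → Bool)) × (Fin d → Bool) → ℝ :=
    fun q => P q.1 / (Fintype.card (Fin d → Bool) : ℝ) with hR
  set P₁ : (Fin n₁ → Bool) → ℝ := fun a => ∑ b, P (a, b) with hP₁
  set Q : (Fin n₁ → Bool) × (Fin d₁ → Bool) → ℝ :=
    pushf R (fun q => (q.1.1, E₂ q.1.2 q.2)) with hQ
  set Q' : (Fin n₁ → Bool) × (Fin d₁ → Bool) → ℝ :=
    fun q => P₁ q.1 / (Fintype.card (Fin d₁ → Bool) : ℝ) with hQ'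
  have hcomp : pushf R (fun q => E₁ q.1.1 (E₂ q.1.2 q.2)) = pushf Q (fun q => E₁ q.1 q.2) := by
    rw [hQ, pushf_comp']
  have hP₁prob : IsProb P₁ := by
    constructor
    · intro a; exact Finset.sum_nonneg fun b _ => hP.1 (a, b)
    · rw [hP₁, ← hP.2, Fintype.sum_prod_type]
  have key1 : statDist (pushf Q' (fun q : (Fin n₁ → Bool) × (Fin d₁ → Bool) => E₁ q.1 q.2))
      (fun _ => 1 / (Fintype.card (Fin m → Bool) : ℝ)) ≤ ε₁ :=
    hE₁ P₁ hP₁prob hblock.1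
  have hQval : ∀ a y, Q (a, y) =
      ∑ b, ∑ s, (if E₂ b s = y then P (a, b) / (Fintype.card (Fin d → Bool) : ℝ) else 0) := by
    intro a y
    simp only [hQ, pushf, hR]
    rw [Fintype.sum_prod_type, Fintype.sum_prod_type]
    simp only [Prod.mk.injEq, ite_and]
    have h1 : ∀ a' : Fin n₁ → Bool,
        (∑ b, ∑ s, if a' = a then
          (if E₂ b s = y then P (a', b) / (Fintype.card (Fin d → Bool) : ℝ) else 0) else 0)
        = if a' = a then (∑ b, ∑ s, if E₂ b s = y then
            P (a, b) / (Fintype.card (Fin d → Bool) : ℝ) else 0) else 0 := by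
      intro a'
      by_cases h : a' = a <;> simp [h]
    rw [Finset.sum_congr rfl fun a' _ => h1 a', Finset.sum_ite_eq' Finset.univ a]
    simp
  have key2 : statDist Q Q' ≤ ε₂ := by
    have hbound : ∀ a : Fin n₁ → Bool,
        (∑ y, |Q (a, y) - Q' (a, y)|) ≤ P₁ a * (2 * ε₂) := by
      intro a
      have hP₁nn : 0 ≤ P₁ a := Finset.sum_nonneg fun b _ => hP.1 (a, b)
      rcases eq_or_lt_of_le hP₁nn with h0 | hpos
      · have hz : ∀ b, P (a, b) = 0 := by
          intro b
          exact (Finset.sum_eq_zero_iff_of_nonneg (fun b _ => hP.1 (a, b))).mp h0.symm b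
            (Finset.mem_univ b)
        have hQ0 : ∀ y, Q (a, y) = 0 := fun y => by rw [hQval]; simp [hz]
        have hQ'0 : ∀ y, Q' (a, y) = 0 := fun y => by rw [hQ']; simp [← h0]
        simp [hQ0, hQ'0, ← h0]
      · set Pa : (Fin n₂ → Bool) → ℝ := fun b => P (a, b) / P₁ a with hPa
        have hPaprob : IsProb Pa := by
          refine ⟨fun b => div_nonneg (hP.1 (a, b)) hP₁nn, ?_⟩
          rw [hPa]
          rw [← Finset.sum_div]
          exact div_self hpos.ne'
        have hPame : MinEntropyGe Pa k₂ := fun b => hblock.2 a hpos b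
        have hstat := hE₂ Pa hPaprob hPame
        set G : (Fin d₁ → Bool) → ℝ :=
          pushf (fun q : (Fin n₂ → Bool) × (Fin d → Bool) =>
            Pa q.1 / (Fintype.card (Fin d → Bool) : ℝ)) (fun q => E₂ q.1 q.2) with hG
        have hsum : (∑ y, |G y - 1 / (Fintype.card (Fin d₁ → Bool) : ℝ)|) ≤ 2 * ε₂ := by
          have := hstat
          unfold statDist at this
          linarith
        have hfac : ∀ y, Q (a, y) - Q' (a, y)
            = P₁ a * (G y - 1 / (Fintype.card (Fin d₁ → Bool) : ℝ)) := by
          intro y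
          rw [hQval, hQ', mul_sub]
          congr 1
          · rw [hG]
            simp only [pushf]
            rw [Fintype.sum_prod_type, Finset.mul_sum]
            refine Finset.sum_congr rfl fun b _ => ?_
            rw [Finset.mul_sum]
            refine Finset.sum_congr rfl fun s _ => ?_
            split_ifs with h
            · rw [hPa]
              field_simp
            · simp
          · rw [mul_one_div]
        calc (∑ y, |Q (a, y) - Q' (a, y)|)
            = ∑ y, P₁ a * |G y - 1 / (Fintype.card (Fin d₁ → Bool) : ℝ)| := by
              refine Finset.sum_congr rfl fun y _ => ?_
              rw [hfac, abs_mul, abs_of_nonneg hP₁nn]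
          _ = P₁ a * ∑ y, |G y - 1 / (Fintype.card (Fin d₁ → Bool) : ℝ)| :=
              (Finset.mul_sum _ _ _).symm
          _ ≤ P₁ a * (2 * ε₂) := mul_le_mul_of_nonneg_left hsum hP₁nn
    unfold statDist
    rw [div_le_iff₀ (by norm_num : (0:ℝ) < 2)]
    rw [Fintype.sum_prod_type]
    calc (∑ a, ∑ y, |Q (a, y) - Q' (a, y)|)
        ≤ ∑ a, P₁ a * (2 * ε₂) := Finset.sum_le_sum fun a _ => hbound a
      _ = (∑ a, P₁ a) * (2 * ε₂) := (Finset.sum_mul _ _ _).symm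
      _ = ε₂ * 2 := by rw [hP₁prob.2]; ring
  calc statDist (pushf R (fun q => E₁ q.1.1 (E₂ q.1.2 q.2)))
        (fun _ => 1 / (Fintype.card (Fin m → Bool) : ℝ))
      = statDist (pushf Q (fun q => E₁ q.1 q.2))
        (fun _ => 1 / (Fintype.card (Fin m → Bool) : ℝ)) := by rw [hcomp]
    _ ≤ statDist (pushf Q (fun q => E₁ q.1 q.2)) (pushf Q' (fun q => E₁ q.1 q.2))
        + statDist (pushf Q' (fun q => E₁ q.1 q.2))
          (fun _ => 1 / (Fintype.card (Fin m → Bool) : ℝ)) := statDist_triangle' _ _ _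
    _ ≤ statDist Q Q' + ε₁ := add_le_add (statDist_pushf' _ _ _) key1
    _ ≤ ε₂ + ε₁ := by linarith
    _ = ε₁ + ε₂ := add_comm _ _
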